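/- Let a ∈ ℝ, w ∈ ℂ with w ≠ 0 and |a| < |w|, and let τ > 0. Then there exists Ω ∈ ℝ such that i·Ω + a − w·exp(−τ·i·Ω) = 0 if and only if at least one of the following holds: (i) Re(w) < a and τ = τ_c(a,w); (ii) there is an integer n ≥ 1 with τ = τ_n^+(a,w); (iii) there is an integer n ≥ 1 with τ = τ_n^−(a,w). -/

import Mathlib

private lemma exp_real_mul_I_eq (s t : ℝ) :
    Complex.exp ((s : ℂ) * Complex.I) = Complex.exp ((t : ℂ) * Complex.I) ↔
      ∃ k : ℤ, s = t + 2 * Real.pi * k := by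
  rw [Complex.exp_eq_exp_iff_exists_int]
  constructor
  · rintro ⟨n, h⟩
    refine ⟨n, ?_⟩
    have h2 := congrArg Complex.im h
    simp [Complex.mul_im, Complex.add_im] at h2
    linarith
  · rintro ⟨k, h⟩
    exact ⟨k, by rw [h]; push_cast; ring⟩

/-- The equation `z + a − w e^{−τ z} = 0` has a root on the imaginary axis iff `τ` equals
the critical delay `τ_c(a,w)` (when `Re w < a`) or one of the values `τ_n^±(a,w)`, `n ≥ 1`. -/
theorem purely_imaginary_roots (a : ℝ) (w : ℂ) (hw : w ≠ 0) (hab : |a| < ‖w‖)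
    (τ : ℝ) (hτ : 0 < τ) :
    (∃ Ω : ℝ, Complex.I * (Ω : ℂ) + (a : ℂ)
        - w * Complex.exp (-(τ : ℂ) * (Complex.I * (Ω : ℂ))) = 0) ↔
      ((w.re < a ∧
          τ = (|w.arg| - Real.arccos (a / ‖w‖)) /
              Real.sqrt ((‖w‖) ^ 2 - a ^ 2)) ∨
        (∃ n : ℕ, 1 ≤ n ∧
          τ = (w.arg - Real.arccos (a / ‖w‖) + 2 * (n : ℝ) * Real.pi) /
              Real.sqrt ((‖w‖) ^ 2 - a ^ 2)) ∨
        (∃ n : ℕ, 1 ≤ n ∧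
          τ = (-w.arg - Real.arccos (a / ‖w‖) + 2 * (n : ℝ) * Real.pi) /
              Real.sqrt ((‖w‖) ^ 2 - a ^ 2))) := by
  set R := ‖w‖ with hRdef
  have hR0 : 0 < R := norm_pos_iff.mpr hw
  have hRC : (R : ℂ) ≠ 0 := by exact_mod_cast hR0.ne'
  set θ := w.arg with hθdef
  have hθlo : -Real.pi < θ := Complex.neg_pi_lt_arg w
  have hθhi : θ ≤ Real.pi := Complex.arg_le_pi w
  have hπ : 0 < Real.pi := Real.pi_pos
  have ha2 : a ^ 2 < R ^ 2 := by nlinarith [abs_nonneg a, sq_abs a]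
  set Ω₀ := Real.sqrt (R ^ 2 - a ^ 2) with hΩ₀def
  have hΩ₀sq : Ω₀ ^ 2 = R ^ 2 - a ^ 2 := Real.sq_sqrt (by linarith)
  have hΩ₀pos : 0 < Ω₀ := Real.sqrt_pos.mpr (by linarith)
  set φ := Real.arccos (a / R) with hφdef
  have haR1 : a / R ≤ 1 := by rw [div_le_one hR0]; nlinarith [le_abs_self a]
  have haR1' : -1 ≤ a / R := by rw [le_div_iff₀ hR0]; nlinarith [neg_abs_le a]
  have haRlt : a / R < 1 := by
    rw [div_lt_one hR0]; exact lt_of_le_of_lt (le_abs_self a) hab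
  have haRgt : -1 < a / R := by rw [lt_div_iff₀ hR0]; nlinarith [neg_abs_le a]
  have hφpos : 0 < φ := Real.arccos_pos.mpr haRlt
  have hφle : φ ≤ Real.pi := Real.arccos_le_pi _
  have hφlt : φ < Real.pi := by
    refine lt_of_le_of_ne hφle fun h => ?_
    have := Real.arccos_eq_pi.mp h
    linarith
  have hcosφ : Real.cos φ = a / R := Real.cos_arccos haR1' haR1
  have hsinφ : Real.sin φ = Ω₀ / R := by
    rw [hφdef, Real.sin_arccos,
      show 1 - (a / R) ^ 2 = (R ^ 2 - a ^ 2) / R ^ 2 by field_simp,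
      Real.sqrt_div (by linarith) _, Real.sqrt_sq hR0.le]
  have hcosθ : Real.cos θ = w.re / R := Complex.cos_arg hw
  have hplus : (a : ℂ) + (Ω₀ : ℂ) * Complex.I = (R : ℂ) * Complex.exp ((φ : ℂ) * Complex.I) := by
    rw [Complex.exp_mul_I, ← Complex.ofReal_cos, ← Complex.ofReal_sin, hcosφ, hsinφ]
    push_cast
    field_simp
  have hminus : (a : ℂ) + ((-Ω₀ : ℝ) : ℂ) * Complex.I
      = (R : ℂ) * Complex.exp (((-φ : ℝ) : ℂ) * Complex.I) := by
    rw [show ((-φ : ℝ) : ℂ) * Complex.I = (-(φ:ℂ)) * Complex.I by push_cast; ring,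
      Complex.exp_mul_I, Complex.cos_neg, Complex.sin_neg,
      ← Complex.ofReal_cos, ← Complex.ofReal_sin, hcosφ, hsinφ]
    push_cast
    field_simp
  have hwpolar : w = (R : ℂ) * Complex.exp ((θ : ℂ) * Complex.I) :=
    (Complex.norm_mul_exp_arg_mul_I w).symm
  have hcomb : ∀ s : ℝ, w * Complex.exp ((s : ℂ) * Complex.I)
      = (R : ℂ) * Complex.exp (((θ + s : ℝ) : ℂ) * Complex.I) := by
    intro s
    conv_lhs => rw [hwpolar]
    rw [mul_assoc, ← Complex.exp_add]
    congr 1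
    push_cast
    ring
  have hbp : ∀ t : ℝ, (w * Complex.exp ((t : ℂ) * Complex.I) = (a : ℂ) + (Ω₀ : ℂ) * Complex.I
      ↔ ∃ k : ℤ, θ + t = φ + 2 * Real.pi * k) := by
    intro t
    rw [hcomb t, hplus, mul_right_inj' hRC, exp_real_mul_I_eq]
  have hbm : ∀ t : ℝ, (w * Complex.exp ((t : ℂ) * Complex.I)
        = (a : ℂ) + ((-Ω₀ : ℝ) : ℂ) * Complex.I
      ↔ ∃ k : ℤ, θ + t = -φ + 2 * Real.pi * k) := by
    intro t
    rw [hcomb t, hminus, mul_right_inj' hRC, exp_real_mul_I_eq]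
  have heq : ∀ Ω : ℝ, (Complex.I * (Ω : ℂ) + (a : ℂ)
        - w * Complex.exp (-(τ : ℂ) * (Complex.I * (Ω : ℂ))) = 0)
      ↔ w * Complex.exp (((-(τ * Ω) : ℝ) : ℂ) * Complex.I) = (a : ℂ) + (Ω : ℂ) * Complex.I := by
    intro Ω
    rw [sub_eq_zero, show -(τ : ℂ) * (Complex.I * (Ω : ℂ)) = ((-(τ * Ω) : ℝ) : ℂ) * Complex.I by
      push_cast; ring]
    constructor <;> intro h <;> linear_combination -h
  constructor
  · rintro ⟨Ω, h⟩
    rw [heq Ω] at h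
    have h1 : ‖w * Complex.exp (((-(τ * Ω) : ℝ) : ℂ) * Complex.I)‖
        = ‖(a : ℂ) + (Ω : ℂ) * Complex.I‖ := by rw [h]
    rw [norm_mul, Complex.norm_exp_ofReal_mul_I, mul_one] at h1
    have h2 : Complex.normSq ((a : ℂ) + (Ω : ℂ) * Complex.I) = R ^ 2 := by
      rw [← Complex.sq_norm, ← h1]
    simp [Complex.normSq_apply] at h2
    have hΩcases : Ω = Ω₀ ∨ Ω = -Ω₀ := by
      have h3 : (Ω - Ω₀) * (Ω + Ω₀) = 0 := by nlinarith
      rcases mul_eq_zero.mp h3 with h4 | h4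
      · left; linarith
      · right; linarith
    have hpos : 0 < τ * Ω₀ := mul_pos hτ hΩ₀pos
    rcases hΩcases with h4 | h4 <;> subst h4
    · obtain ⟨k, hk⟩ := (hbp (-(τ * Ω₀))).mp h
      rcases lt_trichotomy k 0 with hk0 | hk0 | hk0
      · right; left
        refine ⟨(-k).toNat, by omega, ?_⟩
        have hcast : (((-k).toNat : ℕ) : ℝ) = -(k : ℝ) := by
          have h5 : (((-k).toNat : ℕ) : ℤ) = -k := Int.toNat_of_nonneg (by omega)
          exact_mod_cast congrArg (fun z : ℤ => (z : ℝ)) h5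
        rw [eq_div_iff hΩ₀pos.ne']
        linear_combination -hk - 2 * Real.pi * hcast
      · subst hk0
        have hθpos : 0 < θ := by
          push_cast at hk
          linarith
        left
        constructor
        · have hc : Real.cos θ < Real.cos φ := by
            refine Real.cos_lt_cos_of_nonneg_of_le_pi hφpos.le hθhi ?_
            push_cast at hk
            linarith
          rw [hcosθ, hcosφ] at hc
          calc w.re = (w.re / R) * R := by field_simp
            _ < (a / R) * R := by exact mul_lt_mul_of_pos_right hc hR0
            _ = a := by field_simp
        · rw [abs_of_pos hθpos, eq_div_iff hΩ₀pos.ne']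
          push_cast at hk
          linarith
      · exfalso
        have hk1' : (1:ℤ) ≤ k := by omega
        have hk1 : (1 : ℝ) ≤ (k : ℝ) := by exact_mod_cast hk1'
        have h6 : 2 * Real.pi * 1 ≤ 2 * Real.pi * (k : ℝ) :=
          mul_le_mul_of_nonneg_left hk1 (by positivity)
        linarith
    · obtain ⟨k, hk⟩ := (hbm (-(τ * -Ω₀))).mp h
      rcases lt_trichotomy k 0 with hk0 | hk0 | hk0
      · exfalso
        have hk1' : k ≤ (-1:ℤ) := by omega
        have hk1 : (k : ℝ) ≤ -1 := by exact_mod_cast hk1'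
        have h6 : 2 * Real.pi * (k : ℝ) ≤ 2 * Real.pi * (-1) :=
          mul_le_mul_of_nonneg_left hk1 (by positivity)
        linarith
      · subst hk0
        have hθneg : θ < 0 := by
          push_cast at hk
          linarith
        left
        constructor
        · have hc : Real.cos (-θ) < Real.cos φ := by
            refine Real.cos_lt_cos_of_nonneg_of_le_pi hφpos.le (by linarith) ?_
            push_cast at hk
            linarith
          rw [Real.cos_neg, hcosθ, hcosφ] at hc
          calc w.re = (w.re / R) * R := by field_simp
            _ < (a / R) * R := by exact mul_lt_mul_of_pos_right hc hR0
            _ = a := by field_simp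
        · rw [abs_of_neg hθneg, eq_div_iff hΩ₀pos.ne']
          push_cast at hk
          linarith
      · right; right
        refine ⟨k.toNat, by omega, ?_⟩
        have hcast : ((k.toNat : ℕ) : ℝ) = (k : ℝ) := by
          have h5 : ((k.toNat : ℕ) : ℤ) = k := Int.toNat_of_nonneg (by omega)
          exact_mod_cast congrArg (fun z : ℤ => (z : ℝ)) h5
        rw [eq_div_iff hΩ₀pos.ne']
        linear_combination hk - 2 * Real.pi * hcast
  · rintro (⟨hre, hτeq⟩ | ⟨n, hn, hτeq⟩ | ⟨n, hn, hτeq⟩)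
    · rcases le_or_gt 0 θ with hθ0 | hθ0
      · refine ⟨Ω₀, ?_⟩
        rw [heq Ω₀, hbp]
        refine ⟨0, ?_⟩
        have hτΩ : τ * Ω₀ = |θ| - φ := by
          rw [hτeq]; field_simp
        rw [abs_of_nonneg hθ0] at hτΩ
        push_cast
        linarith
      · refine ⟨-Ω₀, ?_⟩
        rw [heq (-Ω₀), hbm]
        refine ⟨0, ?_⟩
        have hτΩ : τ * Ω₀ = |θ| - φ := by
          rw [hτeq]; field_simp
        rw [abs_of_neg hθ0] at hτΩ
        push_cast
        linarith
    · refine ⟨Ω₀, ?_⟩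
      rw [heq Ω₀, hbp]
      refine ⟨-(n : ℤ), ?_⟩
      have hτΩ : τ * Ω₀ = θ - φ + 2 * (n : ℝ) * Real.pi := by
        rw [hτeq]; field_simp
      push_cast
      linarith
    · refine ⟨-Ω₀, ?_⟩
      rw [heq (-Ω₀), hbm]
      refine ⟨(n : ℤ), ?_⟩
      have hτΩ : τ * Ω₀ = -θ - φ + 2 * (n : ℝ) * Real.pi := by
        rw [hτeq]; field_simp
      push_cast
      linarith
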